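/- Let F be a free group of rank m ≥ 2, φ ∈ Aut(F) with [φ] of finite order k > 1 in Out(F), and let Z = Z(F ⋊_φ ⟨t⟩) be the center of the mapping torus. Then the natural map F → (F ⋊_φ ⟨t⟩)/Z is injective and its image has index k in the quotient. -/

import Mathlib

open SemidirectProduct Multiplicative

/-- The mapping torus `F ⋊_φ ⟨t⟩` of an automorphism `φ` of `F`: the semidirect
product `F ⋊ ℤ` in which the stable letter `t` satisfies `t⁻¹ x t = φ x`. -/
abbrev MappingTorus {F : Type*} [Group F] (φ : MulAut F) : Type _ :=
  SemidirectProduct F (Multiplicative ℤ) ((zpowersHom (MulAut F)) φ⁻¹)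

/-- The stable letter `t` of the mapping torus. -/
def stableLetter {F : Type*} [Group F] (φ : MulAut F) : MappingTorus φ :=
  inr (ofAdd 1)


/-- Distinct generators of a free group do not commute. -/
lemma freeGroup_eq_of_commute_of {X : Type*} {i j : X}
    (h : Commute (FreeGroup.of i) (FreeGroup.of j)) : i = j := by
  classical
  by_contra hij
  have h' := congrArg (FreeGroup.lift (fun x : X =>
      if x = i then Equiv.swap (0 : Fin 3) 1 else if x = j then Equiv.swap 1 2 else 1)) h.eq
  simp only [map_mul, FreeGroup.lift_apply_of] at h'
  simp only [if_neg (Ne.symm hij), if_pos trivial] at h'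
  exact absurd h' (by decide)

/-- Over a subsingleton basis, the free group is "cyclic". -/
lemma freeGroup_exists_gen {X : Type*} [Subsingleton X] :
    ∃ r : FreeGroup X, ∀ g : FreeGroup X, ∃ n : ℤ, g = r ^ n := by
  by_cases hX : Nonempty X
  · obtain ⟨i₀⟩ := hX
    refine ⟨FreeGroup.of i₀, fun g => ?_⟩
    induction g using FreeGroup.induction_on with
    | C1 => exact ⟨0, by simp⟩
    | of x => exact ⟨1, by rw [Subsingleton.elim x i₀, zpow_one]⟩
    | inv_of x _ => exact ⟨-1, by rw [Subsingleton.elim x i₀, zpow_neg, zpow_one]⟩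
    | mul x y hx hy =>
      obtain ⟨n, hn⟩ := hx; obtain ⟨m, hm⟩ := hy
      exact ⟨n + m, by rw [hn, hm, zpow_add]⟩
  · refine ⟨1, fun g => ⟨0, ?_⟩⟩
    induction g using FreeGroup.induction_on with
    | C1 => simp
    | of x => exact absurd ⟨x⟩ hX
    | inv_of x hx => rw [hx]; simp
    | mul x y hx hy => rw [hx, hy]; simp

/-- Two commuting elements of a free group are powers of a common element. -/
lemma freeGroup_commute_powers {X : Type u} (x y : FreeGroup X) (h : Commute x y) :
    ∃ (r : FreeGroup X) (p q : ℤ), x = r ^ p ∧ y = r ^ q := by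
  set H : Subgroup (FreeGroup X) := Subgroup.closure {x, y} with hH
  -- H is commutative
  have hcomm : ∀ a b : H, a * b = b * a := by
    have hle : H ≤ Subgroup.centralizer (H : Set (FreeGroup X)) := by
      rw [hH, Subgroup.centralizer_closure]
      refine (Subgroup.closure_le _).2 fun a ha => ?_
      rw [SetLike.mem_coe, Subgroup.mem_centralizer_iff]
      intro g hg
      have hab : Commute a g := by
        have ha' : a = x ∨ a = y := by simpa using ha
        have hg' : g = x ∨ g = y := by simpa using hg
        rcases ha' with rfl | rfl <;> rcases hg' with rfl | rfl
        exacts [Commute.refl _, h, h.symm, Commute.refl _]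
      exact hab.symm.eq
    intro a b
    have := Subgroup.mem_centralizer_iff.1 (hle b.2) a a.2
    exact Subtype.ext this
  -- the generators of the free group H are a subsingleton
  have : Subsingleton (IsFreeGroup.Generators H) := by
    constructor
    intro i j
    have hc : Commute (IsFreeGroup.toFreeGroup (G := H) (IsFreeGroup.of i))
        (IsFreeGroup.toFreeGroup (G := H) (IsFreeGroup.of j)) := by
      have : Commute (IsFreeGroup.of (G := H) i) (IsFreeGroup.of (G := H) j) :=
        hcomm _ _
      exact this.map _
    have : Commute (FreeGroup.of i) (FreeGroup.of j) := by
      simpa [IsFreeGroup.toFreeGroup, IsFreeGroup.of] using hc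
    exact freeGroup_eq_of_commute_of this
  obtain ⟨r₀, hr₀⟩ := freeGroup_exists_gen (X := IsFreeGroup.Generators H)
  set e := IsFreeGroup.toFreeGroup (G := H)
  have key : ∀ g : H, ∃ n : ℤ, g = e.symm r₀ ^ n := by
    intro g
    obtain ⟨n, hn⟩ := hr₀ (e g)
    exact ⟨n, by
      have := congrArg e.symm hn
      rw [MulEquiv.symm_apply_apply] at this
      rw [this, map_zpow]⟩
  have hx : x ∈ H := Subgroup.subset_closure (by simp)
  have hy : y ∈ H := Subgroup.subset_closure (by simp)
  obtain ⟨p, hp⟩ := key ⟨x, hx⟩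
  obtain ⟨q, hq⟩ := key ⟨y, hy⟩
  refine ⟨(e.symm r₀ : FreeGroup X), p, q, ?_, ?_⟩
  · have := congrArg (Subtype.val) hp
    rwa [SubgroupClass.coe_zpow] at this
  · have := congrArg (Subtype.val) hq
    rwa [SubgroupClass.coe_zpow] at this

/-- Exponent-sum homomorphism of a free group at a generator. -/
noncomputable def expSum {X : Type*} (i : X) : FreeGroup X →* Multiplicative ℤ :=
  letI := Classical.decEq X
  FreeGroup.lift fun j => ofAdd (if j = i then 1 else 0)

lemma expSum_of_self {X : Type*} (i : X) : expSum i (FreeGroup.of i) = ofAdd 1 := by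
  simp [expSum]

lemma expSum_of_ne {X : Type*} {i j : X} (h : j ≠ i) :
    expSum i (FreeGroup.of j) = ofAdd 0 := by
  simp [expSum, h]

lemma expSum_zpow {X : Type*} (i : X) (g : FreeGroup X) (n : ℤ) :
    (expSum i (g ^ n)).toAdd = n * (expSum i g).toAdd := by
  rw [map_zpow]
  simp [smul_eq_mul]

/-- A free group of rank at least two has trivial centre. -/
lemma freeGroup_centerless {m : ℕ} (hm : 2 ≤ m) (f : FreeGroup (Fin m))
    (hf : ∀ x, Commute f x) : f = 1 := by
  set i0 : Fin m := ⟨0, by omega⟩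
  set i1 : Fin m := ⟨1, by omega⟩
  have h01 : i1 ≠ i0 := by simp [i0, i1, Fin.ext_iff]
  set a := FreeGroup.of i0
  set b := FreeGroup.of i1
  -- f is a power of a
  have key : ∀ (c : FreeGroup (Fin m)) (i : Fin m), c = FreeGroup.of i → Commute f c →
      ∃ s : ℤ, f = c ^ s := by
    rintro c i rfl hc
    obtain ⟨r, p, q, hfp, hcq⟩ := freeGroup_commute_powers f _ hc
    have hq : q = 1 ∨ q = -1 := by
      have h1 : (1 : ℤ) = q * (expSum i r).toAdd := by
        have := congrArg (fun z => (expSum i z).toAdd) hcq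
        simpa [expSum_of_self, expSum_zpow] using this
      rcases Int.isUnit_iff.1 (IsUnit.of_mul_eq_one _ h1.symm) with h | h
      · exact Or.inl h
      · exact Or.inr h
    rcases hq with rfl | rfl
    · rw [zpow_one] at hcq
      exact ⟨p, by rw [hfp, hcq]⟩
    · have hr : r = (FreeGroup.of i)⁻¹ := by
        rw [zpow_neg_one] at hcq
        rw [hcq, inv_inv]
      exact ⟨-p, by rw [hfp, hr, inv_zpow']⟩
  obtain ⟨s, hs⟩ := key a i0 rfl (hf a)
  obtain ⟨t, ht⟩ := key b i1 rfl (hf b)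
  have e1 : (expSum i0 f).toAdd = s := by
    rw [hs, expSum_zpow, expSum_of_self]; simp
  have e2 : (expSum i0 f).toAdd = 0 := by
    rw [ht, expSum_zpow, expSum_of_ne h01]; simp
  have hs0 : s = 0 := by omega
  rw [hs, hs0, zpow_zero]

open SemidirectProduct

lemma conj_injective_freeGroup {m : ℕ} (hm : 2 ≤ m) {f g : FreeGroup (Fin m)}
    (h : MulAut.conj f = MulAut.conj g) : f = g := by
  have hpt : ∀ x, f * x * f⁻¹ = g * x * g⁻¹ := by
    intro x
    have := congrArg (fun ψ : MulAut (FreeGroup (Fin m)) => ψ x) h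
    simpa [MulAut.conj_apply] using this
  have hc : ∀ x, Commute (g⁻¹ * f) x := by
    intro x
    have h2 := congrArg (fun y => g⁻¹ * y * f) (hpt x)
    show g⁻¹ * f * x = x * (g⁻¹ * f)
    calc g⁻¹ * f * x = g⁻¹ * (f * x * f⁻¹) * f := by group
    _ = g⁻¹ * (g * x * g⁻¹) * f := by rw [hpt x]
    _ = x * (g⁻¹ * f) := by group
  have := freeGroup_centerless hm _ hc
  rw [mul_eq_one_iff_eq_inv] at this
  exact (inv_injective this).symm

section MT

variable {m : ℕ} (φ : MulAut (FreeGroup (Fin m)))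

lemma phi_fix_of_conj (hm : 2 ≤ m) {k : ℕ} {f₀ : FreeGroup (Fin m)}
    (hf₀ : φ ^ k = MulAut.conj f₀) : φ f₀ = f₀ := by
  apply conj_injective_freeGroup hm
  have key : MulAut.conj (φ f₀) = φ * MulAut.conj f₀ * φ⁻¹ := by
    ext x
    simp only [MulAut.conj_apply, MulAut.mul_apply, map_mul, map_inv]
    congr 2
    rw [MulAut.inv_def]
    exact (φ.apply_symm_apply x).symm
  rw [key, ← hf₀, ← pow_mul_comm', mul_inv_cancel_right]

lemma phi_zpow_fix {f₀ : FreeGroup (Fin m)} (hfix : φ f₀ = f₀) (n : ℤ) :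
    (φ ^ n) f₀ = f₀ := by
  have hinv : φ⁻¹ f₀ = f₀ := by
    conv_lhs => rw [← hfix]
    rw [MulAut.inv_def]
    exact φ.symm_apply_apply f₀
  induction n using Int.induction_on with
  | zero => simp
  | succ i ih =>
    rw [zpow_add_one, MulAut.mul_apply, hfix]
    exact ih
  | pred i ih =>
    rw [zpow_sub_one, MulAut.mul_apply, hinv]
    exact ih

end MT

lemma phi_dvd_of_conj {m : ℕ} (φ : MulAut (FreeGroup (Fin m))) {k : ℕ} (hk : 1 < k)
    {f₀ : FreeGroup (Fin m)} (hf₀ : φ ^ k = MulAut.conj f₀)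
    (hmin : ∀ j : ℕ, 1 ≤ j → j < k → ¬ ∃ g, φ ^ j = MulAut.conj g)
    (n : ℤ) (hn : ∃ g, φ ^ n = MulAut.conj g) : (k : ℤ) ∣ n := by
  obtain ⟨g, hg⟩ := hn
  have hk0 : (0 : ℤ) < (k : ℤ) := by exact_mod_cast Nat.lt_of_lt_of_le Nat.zero_lt_one hk.le
  have h0 : 0 ≤ n % k := Int.emod_nonneg n (ne_of_gt hk0)
  have h1 : n % k < k := Int.emod_lt_of_pos n hk0
  have hrep : φ ^ (n % (k : ℤ)) = MulAut.conj (g * f₀ ^ (-(n / k))) := by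
    have heq : n % (k : ℤ) = n + (k : ℤ) * (-(n / k)) := by rw [Int.emod_def]; ring
    rw [heq, zpow_add, hg, zpow_mul, zpow_natCast, hf₀, ← map_zpow, ← map_mul]
  by_contra hndvd
  have hne : n % k ≠ 0 := fun h => hndvd (Int.dvd_of_emod_eq_zero h)
  have hle : 1 ≤ (n % (k : ℤ)).toNat := by omega
  have hlt : (n % (k : ℤ)).toNat < k := by omega
  refine hmin _ hle hlt ⟨g * f₀ ^ (-(n / k)), ?_⟩
  rw [← hrep, ← zpow_natCast, Int.toNat_of_nonneg h0]

theorem fibre_embeds_in_quotient_by_center {m : ℕ} (hm : 2 ≤ m)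
    (φ : MulAut (FreeGroup (Fin m))) (k : ℕ) (hk : 1 < k)
    (hφk : ∃ f₀, φ ^ k = MulAut.conj f₀)
    (hmin : ∀ j : ℕ, 1 ≤ j → j < k → ¬ ∃ g, φ ^ j = MulAut.conj g) :
    Function.Injective
        ((QuotientGroup.mk' (Subgroup.center (MappingTorus φ))).comp
          (inl : FreeGroup (Fin m) →* MappingTorus φ)) ∧
      ((QuotientGroup.mk' (Subgroup.center (MappingTorus φ))).comp
          (inl : FreeGroup (Fin m) →* MappingTorus φ)).range.index = k := by
  obtain ⟨f₀, hf₀⟩ := hφk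
  have hfix : φ f₀ = f₀ := phi_fix_of_conj φ hm hf₀
  have hinvfix : ∀ n : ℤ, (φ⁻¹ ^ n) f₀ = f₀ := by
    intro n
    rw [inv_zpow']
    exact phi_zpow_fix φ hfix (-n)
  -- the central element z = (f₀, t^k)
  set z : MappingTorus φ := ⟨f₀, ofAdd (k : ℤ)⟩ with hzdef
  have hconjk : (φ⁻¹ ^ (k : ℤ) : MulAut (FreeGroup (Fin m))) = MulAut.conj f₀⁻¹ := by
    rw [inv_zpow, zpow_natCast, hf₀, ← map_inv]
  have hz : z ∈ Subgroup.center (MappingTorus φ) := by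
    rw [Subgroup.mem_center_iff]
    intro g
    ext
    · show g.left * (zpowersHom _ φ⁻¹ g.right) f₀ =
        f₀ * (zpowersHom _ φ⁻¹ (ofAdd (k : ℤ))) g.left
      rw [zpowersHom_apply, zpowersHom_apply, hinvfix]
      have : (φ⁻¹ ^ (ofAdd (k : ℤ)).toAdd) g.left = f₀⁻¹ * g.left * f₀ := by
        rw [toAdd_ofAdd, hconjk, MulAut.conj_apply, inv_inv]
      rw [this]
      group
    · show g.right * ofAdd (k : ℤ) = ofAdd (k : ℤ) * g.right
      exact mul_comm _ _
  -- elements of the centre commute with inl x; consequences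
  have hcen_left : ∀ g ∈ Subgroup.center (MappingTorus φ), ∀ x : FreeGroup (Fin m),
      x * g.left = g.left * (φ⁻¹ ^ g.right.toAdd) x := by
    intro g hg x
    have h1 := congrArg SemidirectProduct.left (Subgroup.mem_center_iff.1 hg (inl x))
    simpa [zpowersHom_apply] using h1
  have hcen_dvd : ∀ g ∈ Subgroup.center (MappingTorus φ), (k : ℤ) ∣ g.right.toAdd := by
    intro g hg
    have hconj : φ ^ (-(g.right.toAdd)) = MulAut.conj g.left⁻¹ := by
      rw [← inv_zpow']
      ext x
      rw [MulAut.conj_apply, inv_inv]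
      have h2 := hcen_left g hg x
      have h3 := congrArg (fun y => g.left⁻¹ * y) h2
      simpa [mul_assoc] using h3.symm
    have := phi_dvd_of_conj φ hk hf₀ hmin _ ⟨_, hconj⟩
    exact dvd_neg.mp this
  constructor
  · -- injectivity
    refine (injective_iff_map_eq_one _).mpr fun f hf1 => ?_
    have hmem : (inl f : MappingTorus φ) ∈ Subgroup.center (MappingTorus φ) := by
      rw [MonoidHom.comp_apply, QuotientGroup.mk'_apply] at hf1
      exact (QuotientGroup.eq_one_iff _).mp hf1
    apply freeGroup_centerless hm
    intro x
    have h1 := Subgroup.mem_center_iff.1 hmem (inl x)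
    rw [← map_mul, ← map_mul] at h1
    exact (inl_injective h1).symm
  · -- index
    set K : Subgroup (Multiplicative ℤ) := AddSubgroup.toSubgroup (AddSubgroup.zmultiples (k : ℤ))
      with hKdef
    have hKmem : ∀ x : Multiplicative ℤ, x ∈ K ↔ (k : ℤ) ∣ x.toAdd := by
      intro x
      exact Int.mem_zmultiples_iff
    have hsup : ((inl : FreeGroup (Fin m) →* MappingTorus φ).range ⊔
        Subgroup.center (MappingTorus φ)) = K.comap (rightHom) := by
      apply le_antisymm
      · refine sup_le ?_ ?_
        · rintro g ⟨f, rfl⟩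
          rw [Subgroup.mem_comap, rightHom_inl]
          exact one_mem K
        · intro g hg
          rw [Subgroup.mem_comap, hKmem]
          exact hcen_dvd g hg
      · intro g hg
        rw [Subgroup.mem_comap, hKmem] at hg
        obtain ⟨q, hq⟩ := hg
        have h1 : g * (z ^ q)⁻¹ ∈ (inl : FreeGroup (Fin m) →* MappingTorus φ).range := by
          rw [range_inl_eq_ker_rightHom, MonoidHom.mem_ker, map_mul]
          have e1 : rightHom ((z ^ q)⁻¹ : MappingTorus φ) = (rightHom (z ^ q))⁻¹ :=
            map_inv _ _
          have e2 : rightHom ((z ^ q : MappingTorus φ)) = (rightHom z) ^ q := map_zpow _ _ _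
          have hrz : (rightHom (z : MappingTorus φ)) = ofAdd (k : ℤ) := rfl
          rw [e1, e2, hrz, mul_inv_eq_one, ← ofAdd_toAdd (rightHom g), hq, Int.ofAdd_mul]
        have h2 : g = (g * (z ^ q)⁻¹) * z ^ q := by group
        rw [h2]
        exact Subgroup.mul_mem _ (Subgroup.mem_sup_left h1)
          (Subgroup.mem_sup_right (Subgroup.zpow_mem _ hz q))
    rw [MonoidHom.range_comp, Subgroup.index_map, QuotientGroup.ker_mk',
      MonoidHom.range_eq_top_of_surjective _ (QuotientGroup.mk'_surjective _),
      Subgroup.index_top, mul_one, hsup,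
      K.index_comap_of_surjective rightHom_surjective, hKdef,
      AddSubgroup.index_toSubgroup, Int.index_zmultiples, Int.natAbs_natCast]
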